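/- In ℂ² ⊗ ℂ² ⊗ ℂ², the vectors φ₁ = |001⟩ − |010⟩ − 2|011⟩ − 2|110⟩, φ₂ = |001⟩ − |010⟩ + 2|011⟩ − 2|101⟩, φ₃ = |001⟩ + |010⟩ − |100⟩ are linearly independent and their span is a three-dimensional genuinely entangled subspace (a GES of the maximal possible dimension 2² − 1 = 3 for three qubits). -/

import Mathlib

noncomputable section

abbrev TriH (d₁ d₂ d₃ : ℕ) := EuclideanSpace ℂ (Fin d₁ × Fin d₂ × Fin d₃)

def BiprodA {d₁ d₂ d₃ : ℕ} (ψ : TriH d₁ d₂ d₃) : Prop :=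
  ∃ (a : Fin d₁ → ℂ) (g : Fin d₂ × Fin d₃ → ℂ), ∀ i j k, ψ (i, j, k) = a i * g (j, k)

def BiprodB {d₁ d₂ d₃ : ℕ} (ψ : TriH d₁ d₂ d₃) : Prop :=
  ∃ (b : Fin d₂ → ℂ) (g : Fin d₁ × Fin d₃ → ℂ), ∀ i j k, ψ (i, j, k) = b j * g (i, k)

def BiprodC {d₁ d₂ d₃ : ℕ} (ψ : TriH d₁ d₂ d₃) : Prop :=
  ∃ (c : Fin d₃ → ℂ) (g : Fin d₁ × Fin d₂ → ℂ), ∀ i j k, ψ (i, j, k) = c k * g (i, j)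

def IsGME3 {d₁ d₂ d₃ : ℕ} (ψ : TriH d₁ d₂ d₃) : Prop :=
  ψ ≠ 0 ∧ ¬ BiprodA ψ ∧ ¬ BiprodB ψ ∧ ¬ BiprodC ψ

def IsGES3 {d₁ d₂ d₃ : ℕ} (V : Submodule ℂ (TriH d₁ d₂ d₃)) : Prop :=
  ∀ ψ ∈ V, ψ ≠ 0 → IsGME3 ψ

/-- The standard basis vector `|ijk⟩` of the three-qubit space. -/
def ket (i j k : Fin 2) : TriH 2 2 2 := WithLp.toLp 2 (fun p => if p = (i, j, k) then (1 : ℂ) else 0)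

def φ1 : TriH 2 2 2 := ket 0 0 1 - ket 0 1 0 - (2 : ℂ) • ket 0 1 1 - (2 : ℂ) • ket 1 1 0
def φ2 : TriH 2 2 2 := ket 0 0 1 - ket 0 1 0 + (2 : ℂ) • ket 0 1 1 - (2 : ℂ) • ket 1 0 1
def φ3 : TriH 2 2 2 := ket 0 0 1 + ket 0 1 0 - ket 1 0 0

variable (x y z : ℂ)

lemma e000 : (x • φ1 + y • φ2 + z • φ3) (0,0,0) = 0 := by
  simp [φ1, φ2, φ3, ket, Prod.ext_iff]
lemma e001 : (x • φ1 + y • φ2 + z • φ3) (0,0,1) = x + y + z := by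
  simp [φ1, φ2, φ3, ket, Prod.ext_iff]
lemma e010 : (x • φ1 + y • φ2 + z • φ3) (0,1,0) = -x - y + z := by
  simp [φ1, φ2, φ3, ket, Prod.ext_iff]; ring
lemma e011 : (x • φ1 + y • φ2 + z • φ3) (0,1,1) = -2*x + 2*y := by
  simp [φ1, φ2, φ3, ket, Prod.ext_iff]; ring
lemma e100 : (x • φ1 + y • φ2 + z • φ3) (1,0,0) = -z := by
  simp [φ1, φ2, φ3, ket, Prod.ext_iff]
lemma e101 : (x • φ1 + y • φ2 + z • φ3) (1,0,1) = -2*y := by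
  simp [φ1, φ2, φ3, ket, Prod.ext_iff]; ring
lemma e110 : (x • φ1 + y • φ2 + z • φ3) (1,1,0) = -2*x := by
  simp [φ1, φ2, φ3, ket, Prod.ext_iff]; ring
lemma e111 : (x • φ1 + y • φ2 + z • φ3) (1,1,1) = 0 := by
  simp [φ1, φ2, φ3, ket, Prod.ext_iff]

lemma sq0 {w : ℂ} (h : w * w = 0) : w = 0 := mul_self_eq_zero.mp h

lemma vanish (h : x • φ1 + y • φ2 + z • φ3 = 0) : x = 0 ∧ y = 0 ∧ z = 0 := by
  have h110 := e110 x y z; have h101 := e101 x y z; have h100 := e100 x y z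
  rw [h] at h110 h101 h100
  simp only [PiLp.zero_apply] at h110 h101 h100
  refine ⟨?_, ?_, ?_⟩
  · linear_combination h110 / 2
  · linear_combination h101 / 2
  · linear_combination h100

lemma keyA (h : BiprodA (x • φ1 + y • φ2 + z • φ3)) : x = 0 ∧ y = 0 ∧ z = 0 := by
  obtain ⟨a, g, hh⟩ := h
  have m1 : (x • φ1 + y • φ2 + z • φ3) (0,0,1) * (x • φ1 + y • φ2 + z • φ3) (1,1,1)
      = (x • φ1 + y • φ2 + z • φ3) (0,1,1) * (x • φ1 + y • φ2 + z • φ3) (1,0,1) := by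
    rw [hh 0 0 1, hh 1 1 1, hh 0 1 1, hh 1 0 1]; ring
  have m2 : (x • φ1 + y • φ2 + z • φ3) (0,1,0) * (x • φ1 + y • φ2 + z • φ3) (1,1,1)
      = (x • φ1 + y • φ2 + z • φ3) (0,1,1) * (x • φ1 + y • φ2 + z • φ3) (1,1,0) := by
    rw [hh 0 1 0, hh 1 1 1, hh 0 1 1, hh 1 1 0]; ring
  have m3 : (x • φ1 + y • φ2 + z • φ3) (0,0,1) * (x • φ1 + y • φ2 + z • φ3) (1,1,0)
      = (x • φ1 + y • φ2 + z • φ3) (0,1,0) * (x • φ1 + y • φ2 + z • φ3) (1,0,1) := by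
    rw [hh 0 0 1, hh 1 1 0, hh 0 1 0, hh 1 0 1]; ring
  have m4 : (x • φ1 + y • φ2 + z • φ3) (0,0,0) * (x • φ1 + y • φ2 + z • φ3) (1,0,1)
      = (x • φ1 + y • φ2 + z • φ3) (0,0,1) * (x • φ1 + y • φ2 + z • φ3) (1,0,0) := by
    rw [hh 0 0 0, hh 1 0 1, hh 0 0 1, hh 1 0 0]; ring
  rw [e001, e111, e011, e101] at m1
  rw [e010, e111, e011, e110] at m2
  rw [e001, e110, e010, e101] at m3
  rw [e000, e101, e001, e100] at m4
  have hxy : x = y := by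
    have hsq : (x - y) * (x - y) = 0 := by linear_combination m1 / 4 - m2 / 4
    have := sq0 hsq
    linear_combination this
  subst hxy
  have hy : x = 0 := sq0 (by linear_combination -m3 / 8)
  subst hy
  have hz : z = 0 := sq0 (by linear_combination m4)
  exact ⟨rfl, rfl, hz⟩

lemma keyB (h : BiprodB (x • φ1 + y • φ2 + z • φ3)) : x = 0 ∧ y = 0 ∧ z = 0 := by
  obtain ⟨b, g, hh⟩ := h
  have n1 : (x • φ1 + y • φ2 + z • φ3) (0,0,0) * (x • φ1 + y • φ2 + z • φ3) (0,1,1)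
      = (x • φ1 + y • φ2 + z • φ3) (0,0,1) * (x • φ1 + y • φ2 + z • φ3) (0,1,0) := by
    rw [hh 0 0 0, hh 0 1 1, hh 0 0 1, hh 0 1 0]; ring
  have n2 : (x • φ1 + y • φ2 + z • φ3) (0,0,0) * (x • φ1 + y • φ2 + z • φ3) (1,1,0)
      = (x • φ1 + y • φ2 + z • φ3) (1,0,0) * (x • φ1 + y • φ2 + z • φ3) (0,1,0) := by
    rw [hh 0 0 0, hh 1 1 0, hh 1 0 0, hh 0 1 0]; ring
  have n3 : (x • φ1 + y • φ2 + z • φ3) (0,0,1) * (x • φ1 + y • φ2 + z • φ3) (1,1,0)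
      = (x • φ1 + y • φ2 + z • φ3) (1,0,0) * (x • φ1 + y • φ2 + z • φ3) (0,1,1) := by
    rw [hh 0 0 1, hh 1 1 0, hh 1 0 0, hh 0 1 1]; ring
  have n4 : (x • φ1 + y • φ2 + z • φ3) (0,0,1) * (x • φ1 + y • φ2 + z • φ3) (1,1,1)
      = (x • φ1 + y • φ2 + z • φ3) (1,0,1) * (x • φ1 + y • φ2 + z • φ3) (0,1,1) := by
    rw [hh 0 0 1, hh 1 1 1, hh 1 0 1, hh 0 1 1]; ring
  have n5 : (x • φ1 + y • φ2 + z • φ3) (1,0,0) * (x • φ1 + y • φ2 + z • φ3) (1,1,1)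
      = (x • φ1 + y • φ2 + z • φ3) (1,0,1) * (x • φ1 + y • φ2 + z • φ3) (1,1,0) := by
    rw [hh 1 0 0, hh 1 1 1, hh 1 0 1, hh 1 1 0]; ring
  rw [e000, e011, e001, e010] at n1
  rw [e000, e110, e100, e010] at n2
  rw [e001, e110, e100, e011] at n3
  rw [e001, e111, e101, e011] at n4
  rw [e100, e111, e101, e110] at n5
  have hy : y = 0 := sq0 (by linear_combination -n5 / 4 + n4 / 4)
  subst hy
  have hz : z = 0 := sq0 (by linear_combination -n1 / 3 + 2 * n2 / 3 - n3 / 6)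
  subst hz
  have hx : x = 0 := sq0 (by linear_combination n1)
  exact ⟨hx, rfl, rfl⟩

lemma keyC (h : BiprodC (x • φ1 + y • φ2 + z • φ3)) : x = 0 ∧ y = 0 ∧ z = 0 := by
  obtain ⟨c, g, hh⟩ := h
  have p1 : (x • φ1 + y • φ2 + z • φ3) (1,0,0) * (x • φ1 + y • φ2 + z • φ3) (1,1,1)
      = (x • φ1 + y • φ2 + z • φ3) (1,1,0) * (x • φ1 + y • φ2 + z • φ3) (1,0,1) := by
    rw [hh 1 0 0, hh 1 1 1, hh 1 1 0, hh 1 0 1]; ring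
  have p2 : (x • φ1 + y • φ2 + z • φ3) (0,1,0) * (x • φ1 + y • φ2 + z • φ3) (1,1,1)
      = (x • φ1 + y • φ2 + z • φ3) (1,1,0) * (x • φ1 + y • φ2 + z • φ3) (0,1,1) := by
    rw [hh 0 1 0, hh 1 1 1, hh 1 1 0, hh 0 1 1]; ring
  have p3 : (x • φ1 + y • φ2 + z • φ3) (0,1,0) * (x • φ1 + y • φ2 + z • φ3) (1,0,1)
      = (x • φ1 + y • φ2 + z • φ3) (1,0,0) * (x • φ1 + y • φ2 + z • φ3) (0,1,1) := by
    rw [hh 0 1 0, hh 1 0 1, hh 1 0 0, hh 0 1 1]; ring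
  have p4 : (x • φ1 + y • φ2 + z • φ3) (0,0,0) * (x • φ1 + y • φ2 + z • φ3) (1,0,1)
      = (x • φ1 + y • φ2 + z • φ3) (1,0,0) * (x • φ1 + y • φ2 + z • φ3) (0,0,1) := by
    rw [hh 0 0 0, hh 1 0 1, hh 1 0 0, hh 0 0 1]; ring
  rw [e100, e111, e110, e101] at p1
  rw [e010, e111, e110, e011] at p2
  rw [e010, e101, e100, e011] at p3
  rw [e000, e101, e100, e001] at p4
  have hx : x = 0 := sq0 (by linear_combination -p1 / 4 - p2 / 4)
  subst hx
  have hy : y = 0 := sq0 (by linear_combination p3 / 2)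
  subst hy
  have hz : z = 0 := sq0 (by linear_combination p4)
  exact ⟨rfl, rfl, hz⟩

lemma hli : LinearIndependent ℂ ![φ1, φ2, φ3] := by
  rw [Fintype.linearIndependent_iff]
  intro g hg
  rw [Fin.sum_univ_three] at hg
  simp only [Matrix.cons_val_zero, Matrix.cons_val_one, Matrix.head_cons,
    Matrix.cons_val_two, Matrix.tail_cons] at hg
  obtain ⟨h1, h2, h3⟩ := vanish _ _ _ hg
  intro i
  fin_cases i <;> assumption

/-- `φ₁ = |001⟩ − |010⟩ − 2|011⟩ − 2|110⟩`,
`φ₂ = |001⟩ − |010⟩ + 2|011⟩ − 2|101⟩`, `φ₃ = |001⟩ + |010⟩ − |100⟩` are linearly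
independent and span a three-dimensional GES of `ℂ²⊗ℂ²⊗ℂ²`. -/
theorem GES1_three_qubits :
    LinearIndependent ℂ
      ![ket 0 0 1 - ket 0 1 0 - (2 : ℂ) • ket 0 1 1 - (2 : ℂ) • ket 1 1 0,
        ket 0 0 1 - ket 0 1 0 + (2 : ℂ) • ket 0 1 1 - (2 : ℂ) • ket 1 0 1,
        ket 0 0 1 + ket 0 1 0 - ket 1 0 0] ∧
    Module.finrank ℂ (Submodule.span ℂ
      {ket 0 0 1 - ket 0 1 0 - (2 : ℂ) • ket 0 1 1 - (2 : ℂ) • ket 1 1 0,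
       ket 0 0 1 - ket 0 1 0 + (2 : ℂ) • ket 0 1 1 - (2 : ℂ) • ket 1 0 1,
       ket 0 0 1 + ket 0 1 0 - ket 1 0 0}) = 3 ∧
    IsGES3 (Submodule.span ℂ
      {ket 0 0 1 - ket 0 1 0 - (2 : ℂ) • ket 0 1 1 - (2 : ℂ) • ket 1 1 0,
       ket 0 0 1 - ket 0 1 0 + (2 : ℂ) • ket 0 1 1 - (2 : ℂ) • ket 1 0 1,
       ket 0 0 1 + ket 0 1 0 - ket 1 0 0}) := by
  have hset : ({ket 0 0 1 - ket 0 1 0 - (2 : ℂ) • ket 0 1 1 - (2 : ℂ) • ket 1 1 0,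
       ket 0 0 1 - ket 0 1 0 + (2 : ℂ) • ket 0 1 1 - (2 : ℂ) • ket 1 0 1,
       ket 0 0 1 + ket 0 1 0 - ket 1 0 0} : Set (TriH 2 2 2)) = {φ1, φ2, φ3} := rfl
  have hrange : Set.range ![φ1, φ2, φ3] = {φ1, φ2, φ3} := by
    ext v
    simp [Matrix.range_cons, Matrix.range_empty]
    tauto
  refine ⟨hli, ?_, ?_⟩
  · rw [hset, ← hrange, finrank_span_eq_card hli]
    simp
  · rw [hset]
    intro ψ hmem hne
    have hex : ∃ x y z : ℂ, ψ = x • φ1 + y • φ2 + z • φ3 := by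
      rw [show ({φ1, φ2, φ3} : Set (TriH 2 2 2)) = insert φ1 (insert φ2 {φ3}) from rfl,
        Submodule.mem_span_insert] at hmem
      obtain ⟨a, w, hw, rfl⟩ := hmem
      rw [Submodule.mem_span_insert] at hw
      obtain ⟨b, u, hu, rfl⟩ := hw
      rw [Submodule.mem_span_singleton] at hu
      obtain ⟨c, rfl⟩ := hu
      exact ⟨a, b, c, by module⟩
    obtain ⟨x, y, z, rfl⟩ := hex
    refine ⟨hne, ?_, ?_, ?_⟩
    · intro hb
      obtain ⟨hx, hy, hz⟩ := keyA x y z hb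
      exact hne (by rw [hx, hy, hz]; simp)
    · intro hb
      obtain ⟨hx, hy, hz⟩ := keyB x y z hb
      exact hne (by rw [hx, hy, hz]; simp)
    · intro hb
      obtain ⟨hx, hy, hz⟩ := keyC x y z hb
      exact hne (by rw [hx, hy, hz]; simp)
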